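/- Let G be a finitely generated torsion-free nilpotent group, d ∈ ℕ, and ξ ∈ Pol_d(G). Let k ≥ 1 and let g be an element of the k-th term γ_k(G) of the lower central series of G (γ₁(G) = G, γ_{k+1}(G) = [G, γ_k(G)]). Then: if k ≤ d, the function ∂_g ξ belongs to Pol_{d−k}(G); and if k > d, then ∂_g ξ is identically zero. The same conclusions hold for the right difference ∂'_g ξ. -/

import Mathlib

/-- The left difference operator: `(∂_g ξ)(h) = ξ(g⁻¹h) - ξ(h)`. -/
def lDiff {G : Type*} [Group G] (g : G) (ξ : G → ℝ) : G → ℝ :=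
  fun h => ξ (g⁻¹ * h) - ξ h

/-- The right difference operator: `(∂'_g ξ)(h) = ξ(hg) - ξ(h)`. -/
def rDiff {G : Type*} [Group G] (g : G) (ξ : G → ℝ) : G → ℝ :=
  fun h => ξ (h * g) - ξ h

/-- `ξ` is a polynomial map of degree at most `d`. -/
def IsPolyLe {G : Type*} [Group G] (d : ℕ) (ξ : G → ℝ) : Prop :=
  ∀ gs : List G, gs.length = d + 1 → gs.foldr lDiff ξ = 0

/-- Torsion-free monoid (removed from Mathlib; old definition restored):
no nontrivial element has finite order. -/
def Monoid.IsTorsionFree (G : Type*) [Monoid G] : Prop :=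
  ∀ g : G, g ≠ 1 → ¬IsOfFinOrder g

section helpers
variable {G : Type*} [Group G]

/-- Left translation operator. -/
def lT (a : G) (ξ : G → ℝ) : G → ℝ := fun h => ξ (a⁻¹ * h)

lemma lDiff_zero (g : G) : lDiff g (0 : G → ℝ) = 0 := by
  funext h; simp [lDiff]

lemma lDiff_add (g : G) (ξ η : G → ℝ) : lDiff g (ξ + η) = lDiff g ξ + lDiff g η := by
  funext h; simp [lDiff]; ring

lemma lDiff_neg (g : G) (ξ : G → ℝ) : lDiff g (-ξ) = -(lDiff g ξ) := by
  funext h; simp [lDiff]; ring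

lemma lDiff_sub (g : G) (ξ η : G → ℝ) : lDiff g (ξ - η) = lDiff g ξ - lDiff g η := by
  funext h; simp [lDiff]; ring

lemma lDiff_lT (b a : G) (ξ : G → ℝ) :
    lDiff b (lT a ξ) = lT a (lDiff (a⁻¹ * b * a) ξ) := by
  funext h; simp [lDiff, lT, mul_assoc]

lemma foldr_zero (gs : List G) : gs.foldr lDiff (0 : G → ℝ) = 0 := by
  induction gs with
  | nil => rfl
  | cons g gs ih => simp [List.foldr_cons, ih, lDiff_zero]

lemma foldr_sub (gs : List G) (ξ η : G → ℝ) :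
    gs.foldr lDiff (ξ - η) = gs.foldr lDiff ξ - gs.foldr lDiff η := by
  induction gs with
  | nil => rfl
  | cons g gs ih => simp [List.foldr_cons, ih, lDiff_sub]

lemma foldr_neg (gs : List G) (ξ : G → ℝ) :
    gs.foldr lDiff (-ξ) = -(gs.foldr lDiff ξ) := by
  induction gs with
  | nil => rfl
  | cons g gs ih => simp [List.foldr_cons, ih, lDiff_neg]

lemma foldr_lT (gs : List G) (a : G) (ξ : G → ℝ) :
    gs.foldr lDiff (lT a ξ) = lT a ((gs.map fun b => a⁻¹ * b * a).foldr lDiff ξ) := by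
  induction gs with
  | nil => rfl
  | cons g gs ih => simp [List.foldr_cons, ih, lDiff_lT]

lemma IsPolyLe.zero (n : ℕ) : IsPolyLe n (0 : G → ℝ) := fun gs _ => foldr_zero gs

lemma foldr_add (gs : List G) (ξ η : G → ℝ) :
    gs.foldr lDiff (ξ + η) = gs.foldr lDiff ξ + gs.foldr lDiff η := by
  induction gs with
  | nil => rfl
  | cons g gs ih => simp [List.foldr_cons, ih, lDiff_add]

lemma IsPolyLe.add {n : ℕ} {ξ η : G → ℝ} (hξ : IsPolyLe n ξ) (hη : IsPolyLe n η) :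
    IsPolyLe n (ξ + η) := by
  intro gs hl
  rw [foldr_add, hξ gs hl, hη gs hl, add_zero]

lemma IsPolyLe.sub {n : ℕ} {ξ η : G → ℝ} (hξ : IsPolyLe n ξ) (hη : IsPolyLe n η) :
    IsPolyLe n (ξ - η) := by
  intro gs hl
  rw [foldr_sub, hξ gs hl, hη gs hl, sub_zero]

lemma IsPolyLe.neg {n : ℕ} {ξ : G → ℝ} (hξ : IsPolyLe n ξ) : IsPolyLe n (-ξ) := by
  intro gs hl
  rw [foldr_neg, hξ gs hl, neg_zero]

lemma IsPolyLe.lT {n : ℕ} {ξ : G → ℝ} (hξ : IsPolyLe n ξ) (a : G) :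
    IsPolyLe n (lT a ξ) := by
  intro gs hl
  rw [foldr_lT, hξ _ (by simp [hl]), ]
  funext h; simp [_root_.lT]

lemma IsPolyLe.peel {n : ℕ} {ξ : G → ℝ} (hξ : IsPolyLe (n + 1) ξ) (g : G) :
    IsPolyLe n (lDiff g ξ) := by
  intro gs hl
  have := hξ (gs ++ [g]) (by simp [hl])
  rwa [List.foldr_append] at this

lemma IsPolyLe.peel_many {m n : ℕ} {ξ : G → ℝ} (hξ : IsPolyLe (m + n) ξ)
    (gs : List G) (hl : gs.length = m) : IsPolyLe n (gs.foldr lDiff ξ) := by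
  intro hs hls
  have := hξ (hs ++ gs) (by simp [hl, hls]; omega)
  rwa [List.foldr_append] at this

lemma IsPolyLe.deg_zero {ξ : G → ℝ} (hξ : IsPolyLe 0 ξ) (g : G) : lDiff g ξ = 0 :=
  hξ [g] rfl

lemma lDiff_one (ξ : G → ℝ) : lDiff (1 : G) ξ = 0 := by
  funext h; simp [lDiff]

lemma lDiff_mul (a b : G) (ξ : G → ℝ) :
    lDiff (a * b) ξ = lDiff a ξ + lT a (lDiff b ξ) := by
  funext h; simp [lDiff, lT, mul_assoc]

lemma lDiff_inv (a : G) (ξ : G → ℝ) :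
    lDiff a⁻¹ ξ = -(lT a⁻¹ (lDiff a ξ)) := by
  funext h; simp [lDiff, lT]

lemma lDiff_commutator (x y : G) (ξ : G → ℝ) :
    lDiff (x * y * x⁻¹ * y⁻¹) ξ
      = lT (x * y) (lDiff x⁻¹ (lDiff y⁻¹ ξ) - lDiff y⁻¹ (lDiff x⁻¹ ξ)) := by
  funext h
  simp [lDiff, lT, mul_assoc]
  ring

lemma lDiff_rDiff_comm (a g : G) (ξ : G → ℝ) :
    lDiff a (rDiff g ξ) = rDiff g (lDiff a ξ) := by
  funext h; simp [lDiff, rDiff, mul_assoc]; ring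

lemma foldr_rDiff (gs : List G) (g : G) (ξ : G → ℝ) :
    gs.foldr lDiff (rDiff g ξ) = rDiff g (gs.foldr lDiff ξ) := by
  induction gs with
  | nil => rfl
  | cons a gs ih => simp [List.foldr_cons, ih, lDiff_rDiff_comm]

lemma rDiff_eq (g : G) (ξ : G → ℝ) (h : G) :
    rDiff g ξ h = lDiff (h * g⁻¹ * h⁻¹) ξ h := by
  simp [lDiff, rDiff, mul_assoc]

/-- Key lemma (Leibman): if `ξ ∈ Pol_d` and `g ∈ γ_{j+1}(G) = lowerCentralSeries G j`,
then `∂_g ξ ∈ Pol_{d-j-1}` if `j < d`, and `∂_g ξ = 0` if `d ≤ j`. -/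
lemma mainL (d : ℕ) (ξ : G → ℝ) (hξ : IsPolyLe d ξ) (j : ℕ) (g : G)
    (hg : g ∈ (⊤ : Subgroup G).lowerCentralSeries j) :
    (j < d → IsPolyLe (d - j - 1) (lDiff g ξ)) ∧ (d ≤ j → lDiff g ξ = 0) := by
  induction d using Nat.strong_induction_on generalizing ξ j g with
  | _ d IHd =>
  induction j generalizing g with
  | zero =>
    constructor
    · intro hd
      have hd' : d - 0 - 1 + 1 = d := by omega
      rw [← hd'] at hξ
      exact hξ.peel g
    · intro hd
      have : d = 0 := by omega
      subst this
      exact hξ.deg_zero g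
  | succ j IHj =>
    rw [Subgroup.lowerCentralSeries_succ] at hg
    induction hg using Subgroup.closure_induction with
    | mem x hx =>
      obtain ⟨p, hp, q, -, rfl⟩ := hx
      rw [commutatorElement_def, lDiff_commutator]
      have hterm1 : (j + 1 < d → IsPolyLe (d - j - 2) (lDiff p⁻¹ (lDiff q⁻¹ ξ)))
          ∧ (d ≤ j + 1 → lDiff p⁻¹ (lDiff q⁻¹ ξ) = 0) := by
        rcases Nat.eq_zero_or_pos d with h0 | h0
        · subst h0
          constructor
          · omega
          · intro _
            rw [hξ.deg_zero q⁻¹, lDiff_zero]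
        · have hη : IsPolyLe (d - 1) (lDiff q⁻¹ ξ) := by
            have hd' : d - 1 + 1 = d := by omega
            rw [← hd'] at hξ
            exact hξ.peel q⁻¹
          have := IHd (d - 1) (by omega) (lDiff q⁻¹ ξ) hη j p⁻¹ (inv_mem hp)
          constructor
          · intro hlt
            have := this.1 (by omega)
            have he : d - 1 - j - 1 = d - j - 2 := by omega
            rwa [he] at this
          · intro hle
            exact this.2 (by omega)
      have hterm2 : (j + 1 < d → IsPolyLe (d - j - 2) (lDiff q⁻¹ (lDiff p⁻¹ ξ)))
          ∧ (d ≤ j + 1 → lDiff q⁻¹ (lDiff p⁻¹ ξ) = 0) := by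
        have hζ := IHj p⁻¹ (inv_mem hp)
        constructor
        · intro hlt
          have h1 := hζ.1 (by omega)
          have he : d - j - 1 = d - j - 2 + 1 := by omega
          rw [he] at h1
          exact h1.peel q⁻¹
        · intro hle
          rcases Nat.lt_or_ge j d with hj | hj
          · have h1 := hζ.1 hj
            have he : d - j - 1 = 0 := by omega
            rw [he] at h1
            exact h1.deg_zero q⁻¹
          · rw [hζ.2 hj, lDiff_zero]
      constructor
      · intro hlt
        have he : d - (j + 1) - 1 = d - j - 2 := by omega
        rw [he]
        exact ((hterm1.1 hlt).sub (hterm2.1 hlt)).lT (p * q)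
      · intro hle
        rw [hterm1.2 hle, hterm2.2 hle, sub_zero]
        funext h; simp [lT]
    | one =>
      rw [lDiff_one]
      exact ⟨fun _ => IsPolyLe.zero _, fun _ => rfl⟩
    | mul a b _ _ ha hb =>
      rw [lDiff_mul]
      constructor
      · intro hlt
        exact (ha.1 hlt).add ((hb.1 hlt).lT a)
      · intro hle
        rw [ha.2 hle, hb.2 hle]
        funext h; simp [lT]
    | inv a _ ha =>
      rw [lDiff_inv]
      constructor
      · intro hlt
        exact ((ha.1 hlt).lT a⁻¹).neg
      · intro hle
        rw [ha.2 hle]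
        funext h; simp [lT]

end helpers

section final
variable {G : Type*} [Group G]

lemma mainR (d : ℕ) (ξ : G → ℝ) (hξ : IsPolyLe d ξ) (j : ℕ) (g : G)
    (hg : g ∈ (⊤ : Subgroup G).lowerCentralSeries j) :
    (j < d → IsPolyLe (d - j - 1) (rDiff g ξ)) ∧ (d ≤ j → rDiff g ξ = 0) := by
  have hnorm : ((⊤ : Subgroup G).lowerCentralSeries j).Normal := inferInstance
  constructor
  · intro hlt
    intro gs hl
    rw [foldr_rDiff]
    set η := gs.foldr lDiff ξ with hη
    have hηj : IsPolyLe j η := by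
      have hd : d = (d - j - 1 + 1) + j := by omega
      rw [hd] at hξ
      exact hξ.peel_many gs hl
    funext h
    have hmem : h * g⁻¹ * h⁻¹ ∈ (⊤ : Subgroup G).lowerCentralSeries j :=
      hnorm.conj_mem _ (inv_mem hg) h
    have := (mainL j η hηj j _ hmem).2 le_rfl
    rw [Pi.zero_apply, rDiff_eq, this, Pi.zero_apply]
  · intro hle
    funext h
    have hmem : h * g⁻¹ * h⁻¹ ∈ (⊤ : Subgroup G).lowerCentralSeries j :=
      hnorm.conj_mem _ (inv_mem hg) h
    have := (mainL d ξ hξ j _ hmem).2 hle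
    rw [Pi.zero_apply, rDiff_eq, this, Pi.zero_apply]

end final

/-- Let `G` be a finitely generated torsion-free nilpotent group, `ξ ∈ Pol_d(G)`, and
`g ∈ γ_k(G)` (the `k`-th term of the lower central series, `k ≥ 1`; in Mathlib's
indexing `γ_k(G) = lowerCentralSeries G (k-1)`).  If `k ≤ d` then `∂_g ξ ∈ Pol_{d-k}(G)`
and `∂'_g ξ ∈ Pol_{d-k}(G)`; if `k > d` then `∂_g ξ` and `∂'_g ξ` vanish identically. -/
theorem stmt8 {G : Type*} [Group G] [Group.FG G] (hTF : Monoid.IsTorsionFree G)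
    [Group.IsNilpotent G] (d : ℕ) (ξ : G → ℝ) (hξ : IsPolyLe d ξ)
    (k : ℕ) (hk : 1 ≤ k) (g : G) (hg : g ∈ (⊤ : Subgroup G).lowerCentralSeries (k - 1)) :
    (k ≤ d → IsPolyLe (d - k) (lDiff g ξ) ∧ IsPolyLe (d - k) (rDiff g ξ)) ∧
    (d < k → lDiff g ξ = 0 ∧ rDiff g ξ = 0) := by
  have hL := mainL d ξ hξ (k - 1) g hg
  have hR := mainR d ξ hξ (k - 1) g hg
  have he : d - (k - 1) - 1 = d - k := by omega
  constructor
  · intro hkd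
    rw [← he]
    exact ⟨hL.1 (by omega), hR.1 (by omega)⟩
  · intro hdk
    exact ⟨hL.2 (by omega), hR.2 (by omega)⟩
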